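/- Let a₀, b₀ ∈ ℝ and let I ⊆ ℝ be an open interval on which a₀ + b₀ z² > 0. Then the function f(z) = √(a₀ + b₀ z²) solves the ODE (★_{a₀,b₀,λ}) on I with λ = −2 a₀ b₀. -/

import Mathlib

open Real Set

/-- The ODE (★_{a₀,b₀,λ}) for the profile function `f` of a conformally cylindrical
Ricci soliton, at the point `z`. -/
def starODE (a₀ b₀ lam : ℝ) (f : ℝ → ℝ) (z : ℝ) : Prop :=
  0 = -3 * (a₀ * (deriv f z) ^ 2 + b₀ * (f z - z * deriv f z) ^ 2) ^ 2
      - lam * (a₀ * (deriv f z) ^ 2 + b₀ * (f z - z * deriv f z) ^ 2)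
      + (4 * a₀ - b₀ * z ^ 2) * b₀ * (f z) ^ 3 * deriv (deriv f) z
      + (a₀ + b₀ * z ^ 2) ^ 2 * f z * deriv (deriv f) z
          * ((deriv f z) ^ 2 - f z * deriv (deriv f) z)
      + lam * (a₀ + b₀ * z ^ 2) * f z * deriv (deriv f) z
      - (a₀ + b₀ * z ^ 2) * (b₀ * z * f z - (a₀ + b₀ * z ^ 2) * deriv f z)
          * (f z) ^ 2 * deriv (deriv (deriv f)) z

section aux

variable {a₀ b₀ : ℝ}

private lemma sqrt_inner_hasDerivAt (a₀ b₀ z : ℝ) :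
    HasDerivAt (fun t : ℝ => a₀ + b₀ * t ^ 2) (b₀ * (2 * z)) z := by
  simpa using ((hasDerivAt_pow 2 z).const_mul b₀).const_add a₀

private lemma hd1 {z : ℝ} (hs : 0 < a₀ + b₀ * z ^ 2) :
    HasDerivAt (fun t => Real.sqrt (a₀ + b₀ * t ^ 2))
      (b₀ * z / Real.sqrt (a₀ + b₀ * z ^ 2)) z := by
  have hr0 : 0 < Real.sqrt (a₀ + b₀ * z ^ 2) := Real.sqrt_pos.2 hs
  have h := (Real.hasDerivAt_sqrt hs.ne').comp z (sqrt_inner_hasDerivAt a₀ b₀ z)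
  refine h.congr_deriv ?_
  field_simp

private lemma hd2 {z : ℝ} (hs : 0 < a₀ + b₀ * z ^ 2) :
    HasDerivAt (fun t => b₀ * t / Real.sqrt (a₀ + b₀ * t ^ 2))
      (a₀ * b₀ / (Real.sqrt (a₀ + b₀ * z ^ 2)) ^ 3) z := by
  have hr0 : 0 < Real.sqrt (a₀ + b₀ * z ^ 2) := Real.sqrt_pos.2 hs
  have hr2 : (Real.sqrt (a₀ + b₀ * z ^ 2)) ^ 2 = a₀ + b₀ * z ^ 2 := Real.sq_sqrt hs.le
  have hnum : HasDerivAt (fun t : ℝ => b₀ * t) b₀ z := by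
    simpa using (hasDerivAt_id z).const_mul b₀
  have h := hnum.div (hd1 hs) hr0.ne'
  refine h.congr_deriv ?_
  generalize Real.sqrt (a₀ + b₀ * z ^ 2) = r at hr0 hr2 ⊢
  have ha : a₀ = r ^ 2 - b₀ * z ^ 2 := by linarith
  subst ha
  field_simp

private lemma hd3 {z : ℝ} (hs : 0 < a₀ + b₀ * z ^ 2) :
    HasDerivAt (fun t => a₀ * b₀ / (Real.sqrt (a₀ + b₀ * t ^ 2)) ^ 3)
      (-3 * a₀ * b₀ ^ 2 * z / (Real.sqrt (a₀ + b₀ * z ^ 2)) ^ 5) z := by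
  have hr0 : 0 < Real.sqrt (a₀ + b₀ * z ^ 2) := Real.sqrt_pos.2 hs
  have hr2 : (Real.sqrt (a₀ + b₀ * z ^ 2)) ^ 2 = a₀ + b₀ * z ^ 2 := Real.sq_sqrt hs.le
  have hden : HasDerivAt (fun t => (Real.sqrt (a₀ + b₀ * t ^ 2)) ^ 3)
      (3 * (Real.sqrt (a₀ + b₀ * z ^ 2)) ^ 2 * (b₀ * z / Real.sqrt (a₀ + b₀ * z ^ 2))) z := by
    simpa using (hd1 hs).fun_pow 3
  have h := (hasDerivAt_const z (a₀ * b₀)).div hden (by positivity)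
  refine h.congr_deriv ?_
  set r := Real.sqrt (a₀ + b₀ * z ^ 2)
  field_simp
  ring

end aux

/-- `f(z) = √(a₀ + b₀ z²)` solves (★_{a₀,b₀,λ}) with `λ = −2a₀b₀` on any
open interval where `a₀ + b₀ z² > 0`. -/
theorem sqrt_solves_starODE
    (a₀ b₀ : ℝ) (I : Set ℝ) (hI : IsOpen I) (hconv : Convex ℝ I)
    (hpos : ∀ z ∈ I, 0 < a₀ + b₀ * z ^ 2) :
    ∀ z ∈ I, starODE a₀ b₀ (-2 * a₀ * b₀) (fun t => Real.sqrt (a₀ + b₀ * t ^ 2)) z := by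
  intro z hz
  set f : ℝ → ℝ := fun t => Real.sqrt (a₀ + b₀ * t ^ 2) with hfdef
  have hd1' : ∀ t ∈ I, deriv f t = b₀ * t / Real.sqrt (a₀ + b₀ * t ^ 2) := fun t ht =>
    (hd1 (hpos t ht)).deriv
  have hev1 : ∀ t ∈ I, deriv (deriv f) t = a₀ * b₀ / (Real.sqrt (a₀ + b₀ * t ^ 2)) ^ 3 := by
    intro t ht
    have he : deriv f =ᶠ[nhds t] fun u => b₀ * u / Real.sqrt (a₀ + b₀ * u ^ 2) := by
      filter_upwards [hI.mem_nhds ht] with u hu using hd1' u hu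
    rw [he.deriv_eq]
    exact (hd2 (hpos t ht)).deriv
  have hev2 : deriv (deriv (deriv f)) z
      = -3 * a₀ * b₀ ^ 2 * z / (Real.sqrt (a₀ + b₀ * z ^ 2)) ^ 5 := by
    have he : deriv (deriv f) =ᶠ[nhds z]
        fun u => a₀ * b₀ / (Real.sqrt (a₀ + b₀ * u ^ 2)) ^ 3 := by
      filter_upwards [hI.mem_nhds hz] with u hu using hev1 u hu
    rw [he.deriv_eq]
    exact (hd3 (hpos z hz)).deriv
  have hs := hpos z hz
  have hr0 : 0 < Real.sqrt (a₀ + b₀ * z ^ 2) := Real.sqrt_pos.2 hs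
  have hr2 : (Real.sqrt (a₀ + b₀ * z ^ 2)) ^ 2 = a₀ + b₀ * z ^ 2 := Real.sq_sqrt hs.le
  have hfz : f z = Real.sqrt (a₀ + b₀ * z ^ 2) := rfl
  unfold starODE
  rw [hfz, hd1' z hz, hev1 z hz, hev2]
  generalize hrr : Real.sqrt (a₀ + b₀ * z ^ 2) = r at hr0 hr2 ⊢
  have ha : a₀ = r ^ 2 - b₀ * z ^ 2 := by linarith
  subst ha
  field_simp
  ring
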